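/- Let G = (V,E,w) be a weighted directed graph with no negative-weight cycles, and let C be a cycle with minimum weight that, among minimum-weight cycles, has the fewest edges. Let M = {(u_1,v_1),...,(u_t,v_t)} be a set of pairwise non-consecutive edges of C. Then in the bipartite graph on {u_1,...,u_t} × {v_1,...,v_t} with edge weights inherited from G, M is the unique minimum-weight perfect matching. -/

import Mathlib

open Finset
open Fin.NatCast

section Aux
open Fin.CommRing
variable {V : Type*} (w : V → V → ℝ) {L : ℕ} (c : Fin (L + 1) → V)

/-- weight of the walk along the cycle starting at `x`, for `n` steps -/
def pathW (x : Fin (L + 1)) (n : ℕ) : ℝ :=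
  ∑ m ∈ Finset.range n, w (c (x + m)) (c (x + m + 1))

lemma pathW_add (x : Fin (L + 1)) (m n : ℕ) :
    pathW w c x (m + n) = pathW w c x m + pathW w c (x + m) n := by
  unfold pathW
  rw [Finset.sum_range_add]
  congr 1
  refine Finset.sum_congr rfl fun k _ => ?_
  push_cast
  ring_nf

lemma pathW_full (x : Fin (L + 1)) :
    pathW w c x (L + 1) = ∑ i, w (c i) (c (i + 1)) := by
  unfold pathW
  rw [← Fin.sum_univ_eq_sum_range (fun m => w (c (x + m)) (c (x + m + 1))) (L + 1)]
  simp only [Fin.cast_val_eq_self]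
  exact Equiv.sum_comp (Equiv.addLeft x) (fun j => w (c j) (c (j + 1)))

/-- potential function -/
def Fpot (y : Fin (L + 1)) : ℝ :=
  ∑ m ∈ Finset.range y.val, w (c m) (c (m + 1))

lemma tele (x : Fin (L + 1)) (n : ℕ) :
    ∃ k : ℕ, pathW w c x n
      = Fpot w c (x + n) - Fpot w c x + k * (∑ i, w (c i) (c (i + 1))) := by
  induction n with
  | zero => exact ⟨0, by simp [pathW, Fpot]⟩
  | succ n ih =>
    obtain ⟨k, hk⟩ := ih
    have hsplit : pathW w c x (n + 1) = pathW w c x n + w (c (x + n)) (c (x + n + 1)) := by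
      unfold pathW; rw [Finset.sum_range_succ]
    have hxn1 : (x + ((n+1 : ℕ) : Fin (L+1))) = x + (n : Fin (L+1)) + 1 := by
      push_cast; ring
    by_cases hlast : (x + (n : Fin (L+1))).val < L
    · refine ⟨k, ?_⟩
      have hv : ((x + (n : Fin (L+1))) + 1).val = (x + (n : Fin (L+1))).val + 1 :=
        Fin.val_add_one_of_lt hlast
      have hF : Fpot w c ((x + (n : Fin (L+1))) + 1)
          = Fpot w c (x + (n : Fin (L+1))) + w (c (x + (n:Fin (L+1)))) (c (x + (n:Fin (L+1)) + 1)) := by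
        unfold Fpot
        rw [hv, Finset.sum_range_succ, Fin.cast_val_eq_self]
      rw [hsplit, hk, hxn1, hF]; ring
    · -- x + n is the last element
      have hle : (x + (n : Fin (L+1))).val ≤ L := Fin.is_le _
      have hv : (x + (n : Fin (L+1))).val = L := by omega
      refine ⟨k + 1, ?_⟩
      have hlast' : x + (n : Fin (L+1)) = Fin.last L := by
        ext; simpa using hv
      have h0 : x + (n : Fin (L+1)) + 1 = 0 := by
        rw [hlast']; exact Fin.last_add_one L
      have hW : (∑ i, w (c i) (c (i + 1)))
          = Fpot w c (Fin.last L) + w (c (Fin.last L)) (c (Fin.last L + 1)) := by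
        have h1 : ∑ i : Fin (L+1), w (c i) (c (i+1))
            = ∑ m ∈ Finset.range (L+1), w (c (m : Fin (L+1))) (c ((m : Fin (L+1)) + 1)) := by
          rw [← Fin.sum_univ_eq_sum_range (fun m => w (c (m : Fin (L+1))) (c ((m : Fin (L+1)) + 1))) (L+1)]
          simp [Fin.cast_val_eq_self]
        rw [h1, Finset.sum_range_succ]
        unfold Fpot
        rw [Fin.val_last]
        congr 2 <;> rw [Fin.natCast_eq_last]
      rw [hsplit, hk, hxn1, h0, hlast']
      have hF0 : Fpot w c 0 = 0 := by simp [Fpot]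
      rw [show Fin.last L + 1 = 0 from Fin.last_add_one L] at hW
      rw [hF0, hW]
      push_cast
      ring

lemma pathW_one (x : Fin (L + 1)) : pathW w c x 1 = w (c x) (c (x + 1)) := by
  simp [pathW]

variable (E : V → V → Prop)

/-- The key exchange inequality: a chord from `c a` to `c b` skipping at least
two edges of the minimal cycle is strictly heavier than the path it replaces. -/
lemma exchange_lt
    (hcyc : ∀ i, E (c i) (c (i + 1)))
    (hminw : ∀ (L' : ℕ) (c' : Fin (L' + 1) → V), (∀ i, E (c' i) (c' (i + 1))) →
      ∑ i, w (c i) (c (i + 1)) ≤ ∑ i, w (c' i) (c' (i + 1)))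
    (hminlen : ∀ (L' : ℕ) (c' : Fin (L' + 1) → V), (∀ i, E (c' i) (c' (i + 1))) →
      ∑ i, w (c' i) (c' (i + 1)) = ∑ i, w (c i) (c (i + 1)) → L ≤ L')
    (a b : Fin (L + 1)) (hE : E (c a) (c b)) (hd : 2 ≤ (b - a).val) :
    pathW w c a ((b - a).val) < w (c a) (c b) := by
  have hdL : (b - a).val ≤ L := Fin.is_le _
  set n : ℕ := L + 1 - (b - a).val with hndef
  have hn1 : 1 ≤ n := by omega
  have hbn : b + (n : Fin (L + 1)) = a := by
    have h1 : ((n : ℕ) : Fin (L + 1)) = a - b := by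
      rw [hndef, Nat.cast_sub (by omega)]
      rw [show (((L + 1 : ℕ)) : Fin (L + 1)) = 0 from Fin.natCast_self (L + 1)]
      rw [Fin.cast_val_eq_self]
      ring
    rw [h1]; ring
  set c' : Fin (n + 1) → V :=
    fun j => if j = 0 then c a else c (b + ((j.val - 1 : ℕ) : Fin (L + 1))) with hc'def
  have hc'0 : c' 0 = c a := if_pos rfl
  have hc'ne : ∀ j : Fin (n + 1), j ≠ 0 →
      c' j = c (b + ((j.val - 1 : ℕ) : Fin (L + 1))) := fun j hj => if_neg hj
  have hc'succ : ∀ j : Fin (n + 1), c' (j + 1) = c (b + ((j.val : ℕ) : Fin (L + 1))) := by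
    intro j
    rcases Nat.lt_or_ge j.val n with h | h
    · have hv : (j + 1).val = j.val + 1 := Fin.val_add_one_of_lt h
      have hne0 : j + 1 ≠ 0 := by
        intro h0
        rw [h0] at hv
        simp at hv
      rw [hc'ne _ hne0, hv]
      simp
    · have hv : j.val = n := le_antisymm (Fin.is_le j) h
      have hj : j = Fin.last n := Fin.ext (by simpa using hv)
      rw [hj, Fin.last_add_one, hc'0, Fin.val_last, ← hbn]
  have hE' : ∀ j, E (c' j) (c' (j + 1)) := by
    intro j
    rcases eq_or_ne j 0 with hj | hj
    · rw [hj, hc'0, hc'succ 0]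
      simpa using hE
    · rw [hc'ne _ hj, hc'succ j]
      have hjpos : 1 ≤ j.val := Nat.one_le_iff_ne_zero.mpr (by
        intro h0; exact hj (Fin.ext (by simpa using h0)))
      have hcast : ((j.val : ℕ) : Fin (L + 1)) = ((j.val - 1 : ℕ) : Fin (L + 1)) + 1 := by
        rw [show j.val = (j.val - 1) + 1 by omega]
        push_cast
        ring_nf
      rw [hcast, ← add_assoc]
      exact hcyc _
  have hwsum : ∑ j, w (c' j) (c' (j + 1)) = w (c a) (c b) + pathW w c b n := by
    rw [Fin.sum_univ_succ]
    congr 1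
    · rw [hc'0, hc'succ 0]
      norm_num
    · rw [pathW, ← Fin.sum_univ_eq_sum_range
        (fun m => w (c (b + (m : Fin (L + 1)))) (c (b + (m : Fin (L + 1)) + 1))) n]
      refine Fintype.sum_congr _ _ fun j => ?_
      rw [hc'ne j.succ (Fin.succ_ne_zero j), hc'succ j.succ, Fin.val_succ]
      simp only [Nat.add_sub_cancel]
      have hc1 : ((j.val + 1 : ℕ) : Fin (L + 1)) = (j.val : ℕ) + 1 := by push_cast; ring
      rw [hc1, ← add_assoc]
  have h1 := hminw n c' hE'
  have h2 := hminlen n c' hE'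
  rw [hwsum] at h1 h2
  have hne : w (c a) (c b) + pathW w c b n ≠ ∑ i, w (c i) (c (i + 1)) := by
    intro h
    have := h2 h
    omega
  have h3 : ∑ i, w (c i) (c (i + 1)) < w (c a) (c b) + pathW w c b n :=
    lt_of_le_of_ne h1 (Ne.symm hne)
  have h4 : ∑ i, w (c i) (c (i + 1)) = pathW w c a ((b - a).val) + pathW w c b n := by
    have h5 := pathW_add w c a ((b - a).val) n
    rw [show (b - a).val + n = L + 1 from by omega, Fin.cast_val_eq_self,
      add_sub_cancel] at h5
    rw [← pathW_full w c a, h5]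
  linarith
end Aux

/-- Let `G` be a weighted directed graph with no negative-weight cycles, and let `C`
(encoded as `c : Fin (L+1) → V` with cyclic successor `i + 1`) be a minimum-weight cycle
with the fewest edges among minimum-weight cycles. If `M = {(c (ι i), c (ι i + 1))}` is a
set of pairwise non-consecutive edges of `C`, then in the induced bipartite graph on the
tails and heads of `M`, the matching `M` is the unique minimum-weight perfect matching:
every other matching (given by a nontrivial permutation `σ` whose edges all exist in `G`)
has strictly larger weight. -/
theorem min_cycle_unique_matching
    {V : Type*} [Fintype V] (E : V → V → Prop) (w : V → V → ℝ)
    (hNoNeg : ∀ (L : ℕ) (c : Fin (L + 1) → V),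
      (∀ i, E (c i) (c (i + 1))) → 0 ≤ ∑ i, w (c i) (c (i + 1)))
    (L : ℕ) (c : Fin (L + 1) → V) (hinj : Function.Injective c)
    (hcyc : ∀ i, E (c i) (c (i + 1)))
    (hminw : ∀ (L' : ℕ) (c' : Fin (L' + 1) → V), (∀ i, E (c' i) (c' (i + 1))) →
      ∑ i, w (c i) (c (i + 1)) ≤ ∑ i, w (c' i) (c' (i + 1)))
    (hminlen : ∀ (L' : ℕ) (c' : Fin (L' + 1) → V), (∀ i, E (c' i) (c' (i + 1))) →
      ∑ i, w (c' i) (c' (i + 1)) = ∑ i, w (c i) (c (i + 1)) → L ≤ L')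
    (t : ℕ) (ι : Fin t → Fin (L + 1)) (hι : Function.Injective ι)
    (hnoncons : ∀ i j, ι j ≠ ι i + 1)
    (σ : Equiv.Perm (Fin t)) (hσ : σ ≠ 1)
    (hedges : ∀ i, E (c (ι i)) (c (ι (σ i) + 1))) :
    ∑ i, w (c (ι i)) (c (ι i + 1)) < ∑ i, w (c (ι i)) (c (ι (σ i) + 1)) := by
  classical
  obtain ⟨i₀, hi₀⟩ : ∃ i, σ i ≠ i := by
    by_contra h
    push_neg at h
    exact hσ (Equiv.ext fun i => h i)
  have h10 : (1 : Fin (L + 1)) ≠ 0 := fun h => hnoncons i₀ i₀ (by rw [h, add_zero])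
  have hL : 1 ≤ L := by
    rcases Nat.eq_zero_or_pos L with h | h
    · subst h; exact absurd (by decide) h10
    · exact h
  have hW0 : 0 ≤ ∑ i, w (c i) (c (i + 1)) := hNoNeg L c hcyc
  have hval1 : (1 : Fin (L + 1)).val = 1 := by
    have : ((1 : ℕ) : Fin (L + 1)).val = 1 := Fin.val_cast_of_lt (by omega)
    simpa using this
  -- notation
  have hbne : ∀ i, ι (σ i) + 1 ≠ ι i := fun i h => hnoncons (σ i) i h.symm
  have hd0 : ∀ i, ((ι (σ i) + 1) - ι i).val ≠ 0 := by
    intro i h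
    exact hbne i (by
      have h' : (ι (σ i) + 1) - ι i = 0 := Fin.ext (by simpa using h)
      exact sub_eq_zero.mp h')
  have hcast : ∀ i, ι i + ((((ι (σ i) + 1) - ι i).val : ℕ) : Fin (L + 1)) = ι (σ i) + 1 := by
    intro i
    rw [Fin.cast_val_eq_self, add_sub_cancel]
  have hcast1 : ∀ i, ι i + 1 + (((((ι (σ i) + 1) - ι i).val - 1 : ℕ)) : Fin (L + 1))
      = ι (σ i) + 1 := by
    intro i
    have h1 : (1 : Fin (L + 1)) + ((((ι (σ i) + 1) - ι i).val - 1 : ℕ) : Fin (L + 1))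
        = ((((ι (σ i) + 1) - ι i).val : ℕ) : Fin (L + 1)) := by
      rw [show ((ι (σ i) + 1) - ι i).val = (((ι (σ i) + 1) - ι i).val - 1) + 1 by
        have := hd0 i; omega]
      push_cast
      open Fin.CommRing in ring_nf
    rw [add_assoc, h1, hcast]
  -- the key strict inequality for non-fixed points
  have key : ∀ i, σ i ≠ i →
      pathW w c (ι i) (((ι (σ i) + 1) - ι i).val) < w (c (ι i)) (c (ι (σ i) + 1)) := by
    intro i hne
    refine exchange_lt w c E hcyc hminw hminlen (ι i) (ι (σ i) + 1) (hedges i) ?_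
    have hne1 : ((ι (σ i) + 1) - ι i).val ≠ 1 := by
      intro h1
      apply hne
      apply hι
      have hb : ι (σ i) + 1 = ι i + 1 := by
        rw [← hcast i, h1]
        push_cast
        ring
      exact add_right_cancel hb
    have := hd0 i
    omega
  -- decomposition of the path into first edge + rest
  have hdecomp : ∀ i, pathW w c (ι i) (((ι (σ i) + 1) - ι i).val)
      = w (c (ι i)) (c (ι i + 1)) + pathW w c (ι i + 1) ((((ι (σ i) + 1) - ι i).val) - 1) := by
    intro i
    rw [show ((ι (σ i) + 1) - ι i).val = 1 + ((((ι (σ i) + 1) - ι i).val) - 1) by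
      have := hd0 i; omega]
    rw [pathW_add, pathW_one]
    norm_num
  -- fixed points give equality
  have hfix : ∀ i, σ i = i → (((ι (σ i) + 1) - ι i).val) = 1 := by
    intro i h
    rw [h, add_sub_cancel_left, hval1]
  -- pointwise inequality
  have hle : ∀ i ∈ (univ : Finset (Fin t)),
      w (c (ι i)) (c (ι i + 1)) + pathW w c (ι i + 1) ((((ι (σ i) + 1) - ι i).val) - 1)
        ≤ w (c (ι i)) (c (ι (σ i) + 1)) := by
    intro i _
    rcases eq_or_ne (σ i) i with h | h
    · rw [hfix i h]
      simp only [Nat.sub_self]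
      rw [show pathW w c (ι i + 1) 0 = 0 by simp [pathW], add_zero, h]
      
    · exact le_of_lt (by rw [← hdecomp i]; exact key i h)
  have hlt : ∃ i ∈ (univ : Finset (Fin t)),
      w (c (ι i)) (c (ι i + 1)) + pathW w c (ι i + 1) ((((ι (σ i) + 1) - ι i).val) - 1)
        < w (c (ι i)) (c (ι (σ i) + 1)) :=
    ⟨i₀, mem_univ _, by rw [← hdecomp i₀]; exact key i₀ hi₀⟩
  have hsum := Finset.sum_lt_sum hle hlt
  rw [Finset.sum_add_distrib] at hsum
  -- the total correction term is nonnegative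
  have hQ : 0 ≤ ∑ i, pathW w c (ι i + 1) ((((ι (σ i) + 1) - ι i).val) - 1) := by
    choose k hk using fun i => tele w c (ι i + 1) ((((ι (σ i) + 1) - ι i).val) - 1)
    have hk' : ∀ i, pathW w c (ι i + 1) ((((ι (σ i) + 1) - ι i).val) - 1)
        = Fpot w c (ι (σ i) + 1) - Fpot w c (ι i + 1)
          + k i * ∑ j, w (c j) (c (j + 1)) := by
      intro i
      rw [hk i, hcast1 i]
    rw [Finset.sum_congr rfl (fun i _ => hk' i), Finset.sum_add_distrib,
      Finset.sum_sub_distrib]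
    have hperm : ∑ i, Fpot w c (ι (σ i) + 1) = ∑ i, Fpot w c (ι i + 1) :=
      Equiv.sum_comp σ (fun i => Fpot w c (ι i + 1))
    rw [hperm, sub_self, zero_add]
    exact Finset.sum_nonneg fun i _ => mul_nonneg (Nat.cast_nonneg _) hW0
  linarith
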